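/- Let p and q be coprime positive integers. Let S ⊆ ℂ⟦t⟧ be the ℂ-subspace of formal power series f such that the coefficient of t^m in f vanishes for every m not of the form a·p + b·q with a, b ∈ ℕ (S is the subalgebra ℂ⟦t^p, t^q⟧, the image of ℂ⟦u,v⟧ under u ↦ t^p, v ↦ t^q; it is the local ring of the curve x^p = y^q and ℂ⟦t⟧ is its normalization). Then the quotient ℂ-vector space ℂ⟦t⟧/S is finite dimensional and 2 · dim_ℂ (ℂ⟦t⟧/S) = (p−1)·(q−1). -/

import Mathlib

/-- The `ℂ`-subspace `S = ℂ⟦t^p, t^q⟧` of `ℂ⟦t⟧`: series whose coefficient at `t^m`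
vanishes for every `m` not of the form `a·p + b·q` with `a, b ∈ ℕ`. It is the local ring
of the curve `x^p = y^q`, with normalization `ℂ⟦t⟧`. -/
noncomputable def semigroupRingSub (p q : ℕ) : Submodule ℂ (PowerSeries ℂ) where
  carrier := {f | ∀ m : ℕ, (¬ ∃ a b : ℕ, m = a * p + b * q) → PowerSeries.coeff (R := ℂ) m f = 0}
  add_mem' := by
    intro f g hf hg m hm
    simp [map_add, hf m hm, hg m hm]
  zero_mem' := by
    intro m hm
    simp
  smul_mem' := by
    intro c f hf m hm
    simp [hf m hm]


lemma aux_rep_compl {p q : ℕ} (hp : 1 < p) (hq : 1 < q) (hpq : Nat.Coprime p q) {m : ℕ}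
    (hm : m ≤ p * q - p - q) (h : ¬ ∃ a b : ℕ, m = a * p + b * q) :
    ∃ a b : ℕ, p * q - p - q - m = a * p + b * q := by
  haveI : NeZero q := ⟨by omega⟩
  set a : ℕ := ((m : ZMod q) * (p : ZMod q)⁻¹).val with ha
  have haq : a < q := ZMod.val_lt _
  have hunit : IsUnit (p : ZMod q) := (ZMod.isUnit_iff_coprime p q).mpr hpq
  have hcast : ((a * p : ℕ) : ZMod q) = (m : ZMod q) := by
    push_cast
    rw [ha, ZMod.natCast_rightInverse _]
    rw [mul_assoc, ZMod.inv_mul_of_unit _ hunit, mul_one]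
  have hmod : a * p ≡ m [MOD q] := (ZMod.natCast_eq_natCast_iff _ _ _).mp hcast
  have hlt : m < a * p := by
    rcases le_or_gt (a * p) m with hle | hlt
    · exfalso
      obtain ⟨b, hb⟩ := (Nat.modEq_iff_dvd' hle).mp hmod
      exact h ⟨a, b, by rw [mul_comm b q]; omega⟩
    · exact hlt
  obtain ⟨k, hk⟩ := (Nat.modEq_iff_dvd' hlt.le).mp hmod.symm
  have hap : a * p = m + q * k := by omega
  have hk1 : 1 ≤ k := by
    rcases Nat.eq_zero_or_pos k with rfl | h1
    · omega
    · exact h1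
  refine ⟨q - 1 - a, k - 1, ?_⟩
  obtain ⟨c, hc⟩ : ∃ c, q = a + c + 1 := ⟨q - 1 - a, by omega⟩
  obtain ⟨d, hd⟩ : ∃ d, k = d + 1 := ⟨k - 1, by omega⟩
  have hc' : q - 1 - a = c := by omega
  have hd' : k - 1 = d := by omega
  rw [hc', hd']
  have key : p * q = (c * p + d * q) + (p + (q + m)) := by
    calc p * q = (a * p) + c * p + p := by rw [hc]; ring
    _ = (m + q * k) + c * p + p := by rw [hap]
    _ = (m + q * (d + 1)) + c * p + p := by rw [hd]
    _ = (c * p + d * q) + (p + (q + m)) := by ring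
  rw [Nat.sub_sub, Nat.sub_sub]
  exact Nat.sub_eq_of_eq_add key

open Classical in
lemma aux_count {p q : ℕ} (hp : 1 < p) (hq : 1 < q) (hpq : Nat.Coprime p q) :
    2 * ((Finset.range (p * q - p - q + 1)).filter
      (fun m => ¬ ∃ a b : ℕ, m = a * p + b * q)).card = (p - 1) * (q - 1) := by
  classical
  have hfrob := frobeniusNumber_pair hpq hp hq
  have hFnot : ¬ ∃ a b : ℕ, p * q - p - q = a * p + b * q := by
    rintro ⟨a, b, hab⟩
    refine hfrob.1 ?_
    rw [AddSubmonoid.mem_closure_pair]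
    exact ⟨a, b, by simpa [smul_eq_mul] using hab.symm⟩
  have hcards : ((Finset.range (p * q - p - q + 1)).filter
        (fun m => ¬ ∃ a b : ℕ, m = a * p + b * q)).card
      = ((Finset.range (p * q - p - q + 1)).filter
        (fun m => ∃ a b : ℕ, m = a * p + b * q)).card := by
    refine Finset.card_nbij' (fun m => p * q - p - q - m) (fun m => p * q - p - q - m)
      ?_ ?_ ?_ ?_
    · intro m hm
      dsimp only
      rw [Finset.mem_coe, Finset.mem_filter, Finset.mem_range] at hm ⊢
      exact ⟨by omega, aux_rep_compl hp hq hpq (by omega) hm.2⟩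
    · intro m hm
      dsimp only
      rw [Finset.mem_coe, Finset.mem_filter, Finset.mem_range] at hm ⊢
      refine ⟨by omega, ?_⟩
      rintro ⟨a, b, hab⟩
      obtain ⟨a', b', hab'⟩ := hm.2
      refine hFnot ⟨a + a', b + b', ?_⟩
      have h1 : p * q - p - q = (p * q - p - q - m) + m := by omega
      rw [h1, hab, hab']; ring
    · intro m hm
      rw [Finset.mem_coe, Finset.mem_filter, Finset.mem_range] at hm
      dsimp only
      omega
    · intro m hm
      rw [Finset.mem_coe, Finset.mem_filter, Finset.mem_range] at hm
      dsimp only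
      omega
  have hsplit := Finset.card_filter_add_card_filter_not
    (s := Finset.range (p * q - p - q + 1)) (p := fun m => ∃ a b : ℕ, m = a * p + b * q)
  simp only [Finset.card_range] at hsplit
  have h2 : 2 * ((Finset.range (p * q - p - q + 1)).filter
      (fun m => ¬ ∃ a b : ℕ, m = a * p + b * q)).card = p * q - p - q + 1 := by
    omega
  rw [h2]
  obtain ⟨a, rfl⟩ : ∃ a, p = a + 1 := ⟨p - 1, by omega⟩
  obtain ⟨b, rfl⟩ : ∃ b, q = b + 1 := ⟨q - 1, by omega⟩
  have hexp : (a + 1) * (b + 1) = a * b + a + b + 1 := by ring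
  have hab1 : 0 < a * b := Nat.mul_pos (by omega) (by omega)
  simp only [Nat.add_sub_cancel]
  omega

/-- The δ-invariant of the plane curve singularity `x^p − y^q = 0` equals
`(p−1)(q−1)/2` (Example 4.7 combined with Theorem 4.12, formal version):
`ℂ⟦t⟧/ℂ⟦t^p, t^q⟧` is a finite-dimensional `ℂ`-vector space with
`2 · dim_ℂ (ℂ⟦t⟧/S) = (p−1)·(q−1)`. -/
theorem delta_xp_yq (p q : ℕ) (hp : 0 < p) (hq : 0 < q) (hpq : Nat.Coprime p q) :
    FiniteDimensional ℂ (PowerSeries ℂ ⧸ semigroupRingSub p q) ∧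
    2 * Module.finrank ℂ (PowerSeries ℂ ⧸ semigroupRingSub p q) = (p - 1) * (q - 1) := by
  classical
  set F := p * q - p - q with hF
  have hbound : ∀ m : ℕ, (¬ ∃ a b : ℕ, m = a * p + b * q) → m ≤ F := by
    intro m hm
    rcases Nat.lt_or_ge p 2 with hp2 | hp2
    · refine absurd ⟨m, 0, ?_⟩ hm
      have h1 : p = 1 := by omega
      simp [h1]
    rcases Nat.lt_or_ge q 2 with hq2 | hq2
    · refine absurd ⟨0, m, ?_⟩ hm
      have h1 : q = 1 := by omega
      simp [h1]
    have hfrob := frobeniusNumber_pair hpq hp2 hq2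
    refine hfrob.2 ?_
    rw [Set.mem_setOf_eq, AddSubmonoid.mem_closure_pair]
    rintro ⟨a, b, hab⟩
    exact hm ⟨a, b, by simpa [smul_eq_mul] using hab.symm⟩
  set Gfin : Finset ℕ :=
    (Finset.range (F + 1)).filter (fun m => ¬ ∃ a b : ℕ, m = a * p + b * q) with hGfin
  set φ : PowerSeries ℂ →ₗ[ℂ] ({x // x ∈ Gfin} → ℂ) :=
    LinearMap.pi (fun m : {x // x ∈ Gfin} => PowerSeries.coeff (R := ℂ) (m : ℕ)) with hφ
  have hmemG : ∀ m : ℕ, m ∈ Gfin ↔ m < F + 1 ∧ ¬ ∃ a b : ℕ, m = a * p + b * q := by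
    intro m; simp [hGfin]
  have hker : LinearMap.ker φ = semigroupRingSub p q := by
    ext f
    rw [LinearMap.mem_ker]
    constructor
    · intro h m hm
      have hmG : m ∈ Gfin := (hmemG m).mpr ⟨by have := hbound m hm; omega, hm⟩
      have := congrFun h ⟨m, hmG⟩
      simpa [hφ] using this
    · intro h
      funext m
      have hm := ((hmemG m).mp m.2).2
      simpa [hφ] using h (m : ℕ) hm
  have hsurj : Function.Surjective φ := by
    intro g
    refine ⟨∑ m ∈ Gfin.attach, (PowerSeries.monomial (R := ℂ) (m : ℕ)) (g m), ?_⟩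
    funext m'
    simp only [hφ, LinearMap.pi_apply, map_sum, PowerSeries.coeff_monomial]
    rw [Finset.sum_eq_single m']
    · simp
    · intro x _ hx
      rw [if_neg]
      intro hxy
      exact hx (Subtype.ext hxy.symm)
    · intro hm'; exact absurd (Finset.mem_attach _ _) hm'
  let e : (PowerSeries ℂ ⧸ semigroupRingSub p q) ≃ₗ[ℂ] ({x // x ∈ Gfin} → ℂ) :=
    (Submodule.quotEquivOfEq _ _ hker.symm).trans (φ.quotKerEquivOfSurjective hsurj)
  have hfin : FiniteDimensional ℂ (PowerSeries ℂ ⧸ semigroupRingSub p q) :=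
    Module.Finite.equiv e.symm
  refine ⟨hfin, ?_⟩
  rw [e.finrank_eq, Module.finrank_fintype_fun_eq_card, Fintype.card_coe]
  rcases Nat.lt_or_ge p 2 with hp2 | hp2
  · have hpe : p = 1 := by omega
    have hGe : Gfin = ∅ := by
      rw [Finset.eq_empty_iff_forall_notMem]
      intro m hm
      exact ((hmemG m).mp hm).2 ⟨m, 0, by rw [hpe]; ring⟩
    rw [hGe]; simp [hpe]
  rcases Nat.lt_or_ge q 2 with hq2 | hq2
  · have hqe : q = 1 := by omega
    have hGe : Gfin = ∅ := by
      rw [Finset.eq_empty_iff_forall_notMem]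
      intro m hm
      exact ((hmemG m).mp hm).2 ⟨0, m, by rw [hqe]; ring⟩
    rw [hGe]; simp [hqe]
  have := aux_count hp2 hq2 hpq
  rw [hGfin, hF]
  convert this using 3
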